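/- The composition of the induced tamperings of bitwise independent functions through a linear code lands in the affine family: if F_BIT is the family of bitwise independent tampering functions on F₂ⁿ and (ECCenc, ECCdec_R) is as above, then the induced family G = { ECCdec_R ∘ f ∘ ECCenc : f ∈ F_BIT } is contained in the family of affine functions on F₂^m. -/

import Mathlib

inductive BitOp | keep | flip | set0 | set1
deriving DecidableEq

instance : Fintype BitOp :=
  ⟨{BitOp.keep, BitOp.flip, BitOp.set0, BitOp.set1}, fun x => by cases x <;> simp⟩

def BitOp.apply : BitOp → ZMod 2 → ZMod 2
  | .keep, x => x
  | .flip, x => x + 1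
  | .set0, _ => 0
  | .set1, _ => 1

def BitOp.lin : BitOp → ZMod 2
  | .keep => 1 | .flip => 1 | .set0 => 0 | .set1 => 0

def BitOp.aff : BitOp → ZMod 2
  | .keep => 0 | .flip => 1 | .set0 => 0 | .set1 => 1

lemma BitOp.apply_eq (b : BitOp) (x : ZMod 2) :
    b.apply x = x * b.lin + b.aff := by
  cases b <;> simp [BitOp.apply, BitOp.lin, BitOp.aff]

/-- The family of tamperings induced by bitwise independent functions through
a linear code (encoder `𝐮 ↦ 𝐮G`, erasure decoder `𝐲 ↦ 𝐲_R G_R⁻¹`) is contained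
in the family of affine functions on `F₂^m`. -/
theorem stmt_11 (m n : ℕ) (G : Matrix (Fin m) (Fin n) (ZMod 2))
    (R : Fin m ↪ Fin n)
    (hinv : IsUnit (G.submatrix id R)) :
    ∀ f : Fin n → BitOp,
      ∃ (M : Matrix (Fin m) (Fin m) (ZMod 2)) (Δ : Fin m → ZMod 2),
        ∀ u : Fin m → ZMod 2,
          Matrix.vecMul
            (fun i => (f (R i)).apply (Matrix.vecMul u G (R i)))
            (G.submatrix id R)⁻¹ = Matrix.vecMul u M + Δ := by
  intro f
  set A := G.submatrix id R with hA
  refine ⟨A * Matrix.diagonal (fun i => (f (R i)).lin) * A⁻¹,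
    Matrix.vecMul (fun i => (f (R i)).aff) A⁻¹, ?_⟩
  intro u
  have key : (fun i => (f (R i)).apply (Matrix.vecMul u G (R i)))
      = Matrix.vecMul u (A * Matrix.diagonal (fun i => (f (R i)).lin))
        + (fun i => (f (R i)).aff) := by
    funext i
    have h1 : Matrix.vecMul u A i = Matrix.vecMul u G (R i) := by
      simp [hA, Matrix.vecMul, dotProduct, Matrix.submatrix_apply]
    have h2 : Matrix.vecMul u (A * Matrix.diagonal fun i => (f (R i)).lin) i
        = Matrix.vecMul u A i * (f (R i)).lin := by
      rw [← Matrix.vecMul_vecMul, Matrix.vecMul_diagonal]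
    simp [h2, h1, BitOp.apply_eq]
  rw [key, Matrix.add_vecMul, Matrix.vecMul_vecMul]
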